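/- Let S(t) = ∑_{j=1}^k a_j e^{2πi ω_j t} with distinct integer frequencies ω_j and nonzero complex coefficients a_j, let p > 1 be an integer, h ∈ {0,…,p−1}, and suppose |I(S,h;p)| > 1. Then the function f(ε) = |Ŝ_{p,ε}[h]|² − |Ŝ_p[h]|² is a real trigonometric polynomial in ε that is not identically zero; i.e., there exists ε ∈ ℝ with |Ŝ_{p,ε}[h]| ≠ |Ŝ_p[h]|. -/

import Mathlib

/-- The index set `I(S,h;p)` of frequencies congruent to `h` modulo `p`. -/
def aliasIdx {k : ℕ} (ω : Fin k → ℤ) (p h : ℕ) : Finset (Fin k) :=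
  Finset.univ.filter (fun j => ω j ≡ (h : ℤ) [ZMOD (p : ℤ)])

/-- The signal `S(t) = ∑ j, a j * exp(2πi ω_j t)`. -/
noncomputable def signal {k : ℕ} (a : Fin k → ℂ) (ω : Fin k → ℤ) (t : ℝ) : ℂ :=
  ∑ j, a j * Complex.exp (2 * (Real.pi : ℂ) * Complex.I * (ω j : ℂ) * (t : ℂ))

/-- The shifted sub-sampled DFT `Ŝ_{p,ε}[h]`. -/
noncomputable def sdft {k : ℕ} (a : Fin k → ℂ) (ω : Fin k → ℤ) (p : ℕ) (ε : ℝ) (h : ℕ) : ℂ :=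
  ∑ n ∈ Finset.range p,
    signal a ω ((n : ℝ) / (p : ℝ) + ε) *
      Complex.exp (-(2 * (Real.pi : ℂ) * Complex.I) * (n : ℂ) * (h : ℂ) / (p : ℂ))

open Complex in
private lemma intKer (m : ℤ) :
    (∫ x in (0:ℝ)..1, Complex.exp (2 * (Real.pi : ℂ) * I * (m : ℂ) * (x : ℂ))) =
      if m = 0 then 1 else 0 := by
  split_ifs with hm
  · simp [hm]
  · have hπ : (Real.pi : ℂ) ≠ 0 := by exact_mod_cast Real.pi_ne_zero
    have hmc : (m : ℂ) ≠ 0 := Int.cast_ne_zero.2 hm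
    have hc : 2 * (Real.pi : ℂ) * I * (m : ℂ) ≠ 0 :=
      mul_ne_zero (mul_ne_zero (mul_ne_zero two_ne_zero hπ) I_ne_zero) hmc
    rw [integral_exp_mul_complex hc]
    have h1 : Complex.exp (2 * (Real.pi : ℂ) * I * (m : ℂ) * ((1 : ℝ) : ℂ)) = 1 := by
      rw [show (2 * (Real.pi : ℂ) * I * (m : ℂ) * ((1 : ℝ) : ℂ)) =
          (m : ℂ) * (2 * (Real.pi : ℂ) * I) by push_cast; ring]
      exact Complex.exp_int_mul_two_pi_mul_I m
    have h0 : Complex.exp (2 * (Real.pi : ℂ) * I * (m : ℂ) * ((0 : ℝ) : ℂ)) = 1 := by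
      simp
    rw [h1, h0, sub_self, zero_div]

open Complex in
private lemma dftKer {p : ℕ} (hp : 0 < p) (m : ℤ) :
    (∑ n ∈ Finset.range p, Complex.exp (2 * (Real.pi : ℂ) * I * (m : ℂ) * (n : ℂ) / (p : ℂ))) =
      if (p : ℤ) ∣ m then (p : ℂ) else 0 := by
  have hp' : (p : ℂ) ≠ 0 := Nat.cast_ne_zero.2 hp.ne'
  set z := Complex.exp (2 * (Real.pi : ℂ) * I * (m : ℂ) / (p : ℂ)) with hz
  have hterm : ∀ n : ℕ,
      Complex.exp (2 * (Real.pi : ℂ) * I * (m : ℂ) * (n : ℂ) / (p : ℂ)) = z ^ n := by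
    intro n
    rw [hz, ← Complex.exp_nat_mul]
    congr 1; ring
  simp only [hterm]
  by_cases hdvd : (p : ℤ) ∣ m
  · have hz1 : z = 1 := by
      obtain ⟨c, rfl⟩ := hdvd
      rw [hz, show 2 * (Real.pi : ℂ) * I * (((p : ℤ) * c : ℤ) : ℂ) / (p : ℂ) =
          (c : ℂ) * (2 * (Real.pi : ℂ) * I) by push_cast; field_simp]
      exact Complex.exp_int_mul_two_pi_mul_I c
    simp [hz1, hdvd]
  · have h2 : (2 * (Real.pi : ℂ) * I) ≠ 0 :=
      mul_ne_zero (mul_ne_zero two_ne_zero (by exact_mod_cast Real.pi_ne_zero)) I_ne_zero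
    have hz1 : z ≠ 1 := by
      intro hzz
      rw [hz, Complex.exp_eq_one_iff] at hzz
      obtain ⟨c, hc⟩ := hzz
      have hc' : (2 * (Real.pi : ℂ) * I) * ((m : ℂ) / (p : ℂ)) =
          (2 * (Real.pi : ℂ) * I) * (c : ℂ) := by
        rw [← mul_div_assoc, hc]; ring
      have hc'' := mul_left_cancel₀ h2 hc'
      have hm : (m : ℂ) = (c : ℂ) * (p : ℂ) := (div_eq_iff hp').mp hc''
      have hmz : m = c * p := by exact_mod_cast hm
      exact hdvd (hmz ▸ dvd_mul_left (p : ℤ) c)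
    rw [geom_sum_eq hz1]
    have hzp : z ^ p = 1 := by
      rw [hz, ← Complex.exp_nat_mul,
        show (p : ℂ) * (2 * (Real.pi : ℂ) * I * (m : ℂ) / (p : ℂ)) =
          (m : ℂ) * (2 * (Real.pi : ℂ) * I) by field_simp]
      exact Complex.exp_int_mul_two_pi_mul_I m
    rw [hzp, sub_self, zero_div]
    simp [hdvd]

private lemma mul_exp_merge (u v A B C D : ℂ) (h : A + B + C = D) :
    u * Complex.exp A * (v * Complex.exp B) * Complex.exp C = (u * v) * Complex.exp D := by
  subst h; rw [Complex.exp_add, Complex.exp_add]; ring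

open Complex in
private lemma sdft_eq {k : ℕ} (a : Fin k → ℂ) (ω : Fin k → ℤ) (p : ℕ) (hp : 0 < p)
    (h : ℕ) (ε : ℝ) :
    sdft a ω p ε h =
      (p : ℂ) * ∑ j ∈ aliasIdx ω p h,
        a j * Complex.exp (2 * (Real.pi : ℂ) * I * (ω j : ℂ) * (ε : ℂ)) := by
  unfold sdft signal
  simp only [Finset.sum_mul]
  rw [Finset.sum_comm]
  have key : ∀ j : Fin k, ∀ n ∈ Finset.range p,
      a j * Complex.exp (2 * (Real.pi : ℂ) * I * (ω j : ℂ) * (((n : ℝ) / (p : ℝ) + ε : ℝ) : ℂ)) *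
        Complex.exp (-(2 * (Real.pi : ℂ) * I) * (n : ℂ) * (h : ℂ) / (p : ℂ)) =
      (a j * Complex.exp (2 * (Real.pi : ℂ) * I * (ω j : ℂ) * (ε : ℂ))) *
        Complex.exp (2 * (Real.pi : ℂ) * I * ((ω j - (h : ℤ) : ℤ) : ℂ) * (n : ℂ) / (p : ℂ)) := by
    intro j n _
    simp only [mul_assoc, ← Complex.exp_add]
    congr 2
    push_cast
    ring
  calc (∑ j : Fin k, ∑ n ∈ Finset.range p,
        a j * Complex.exp (2 * (Real.pi : ℂ) * I * (ω j : ℂ) * (((n : ℝ) / (p : ℝ) + ε : ℝ) : ℂ)) *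
          Complex.exp (-(2 * (Real.pi : ℂ) * I) * (n : ℂ) * (h : ℂ) / (p : ℂ)))
      = ∑ j : Fin k, (a j * Complex.exp (2 * (Real.pi : ℂ) * I * (ω j : ℂ) * (ε : ℂ))) *
          ∑ n ∈ Finset.range p,
            Complex.exp (2 * (Real.pi : ℂ) * I * ((ω j - (h : ℤ) : ℤ) : ℂ) * (n : ℂ) / (p : ℂ)) := by
        refine Finset.sum_congr rfl fun j _ => ?_
        rw [Finset.mul_sum]
        exact Finset.sum_congr rfl (key j)
    _ = ∑ j : Fin k, (a j * Complex.exp (2 * (Real.pi : ℂ) * I * (ω j : ℂ) * (ε : ℂ))) *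
          (if (p : ℤ) ∣ (ω j - (h : ℤ)) then (p : ℂ) else 0) := by
        refine Finset.sum_congr rfl fun j _ => ?_
        rw [dftKer hp]
    _ = (p : ℂ) * ∑ j ∈ aliasIdx ω p h,
          a j * Complex.exp (2 * (Real.pi : ℂ) * I * (ω j : ℂ) * (ε : ℂ)) := by
        rw [Finset.mul_sum, aliasIdx, Finset.sum_filter]
        refine Finset.sum_congr rfl fun j _ => ?_
        have hiff : (p : ℤ) ∣ (ω j - (h : ℤ)) ↔ ω j ≡ (h : ℤ) [ZMOD (p : ℤ)] := by
          rw [Int.modEq_iff_dvd]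
          constructor
          · intro hd; exact (dvd_sub_comm).mp hd
          · intro hd; exact (dvd_sub_comm).mp hd
        split_ifs with h1 h2 h2
        · ring
        · exact absurd (hiff.mp h1) h2
        · exact absurd (hiff.mpr h2) h1
        · ring

set_option maxHeartbeats 2000000 in
theorem stmt17 {k : ℕ} (a : Fin k → ℂ) (ω : Fin k → ℤ) (hω : Function.Injective ω)
    (ha : ∀ j, a j ≠ 0) (p : ℕ) (hp : 1 < p) (h : ℕ) (hh : h < p)
    (hq : 1 < (aliasIdx ω p h).card) :
    ∃ ε : ℝ, ‖sdft a ω p ε h‖ ≠ ‖sdft a ω p 0 h‖ := by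
  classical
  by_contra hcon
  push_neg at hcon
  have hp0 : 0 < p := lt_trans one_pos hp
  set Iset := aliasIdx ω p h with hIset
  set g : ℝ → ℂ := fun ε => ∑ j ∈ Iset,
      a j * Complex.exp (2 * (Real.pi : ℂ) * Complex.I * (ω j : ℂ) * (ε : ℂ)) with hg
  have hsd : ∀ ε : ℝ, sdft a ω p ε h = (p : ℂ) * g ε := fun ε => sdft_eq a ω p hp0 h ε
  have habs : ∀ ε : ℝ, ‖g ε‖ = ‖g 0‖ := by
    intro ε
    have hc := hcon ε
    rw [hsd ε, hsd 0, norm_mul, norm_mul] at hc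
    have hpc : ‖(p : ℂ)‖ ≠ 0 := by
      simp [Complex.norm_natCast, hp0.ne']
    exact mul_left_cancel₀ hpc hc
  have hconst : ∀ ε : ℝ, g ε * (starRingEnd ℂ) (g ε) = g 0 * (starRingEnd ℂ) (g 0) := by
    intro ε
    rw [Complex.mul_conj, Complex.mul_conj, ← Complex.sq_norm, ← Complex.sq_norm, habs ε]
  -- extremal frequencies
  have hne : Iset.Nonempty := Finset.card_pos.mp (lt_trans one_pos hq)
  obtain ⟨jM, hjM, hjMmax⟩ := Iset.exists_max_image ω hne
  obtain ⟨jm, hjm, hjmmin⟩ := Iset.exists_min_image ω hne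
  obtain ⟨j₂, hj₂, hj₂ne⟩ := Finset.exists_mem_ne hq jm
  have hαpos : ω jm < ω jM := by
    have h1 : ω jm ≤ ω j₂ := hjmmin j₂ hj₂
    have h2 : ω j₂ ≤ ω jM := hjMmax j₂ hj₂
    have h3 : ω jm ≠ ω j₂ := fun he => hj₂ne (hω he).symm
    omega
  set α : ℤ := ω jM - ω jm with hα
  have hαne : α ≠ 0 := by omega
  -- expansion of the constant product times the test character
  have expand : ∀ x : ℝ,
      (g x * (starRingEnd ℂ) (g x)) *
        Complex.exp (2 * (Real.pi : ℂ) * Complex.I * ((-α : ℤ) : ℂ) * (x : ℂ)) =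
      ∑ j ∈ Iset, ∑ l ∈ Iset, (a j * (starRingEnd ℂ) (a l)) *
        Complex.exp (2 * (Real.pi : ℂ) * Complex.I * ((ω j - ω l - α : ℤ) : ℂ) * (x : ℂ)) := by
    intro x
    rw [hg]
    simp only [map_sum, map_mul]
    rw [Finset.sum_mul_sum, Finset.sum_mul]
    refine Finset.sum_congr rfl fun j _ => ?_
    rw [Finset.sum_mul]
    refine Finset.sum_congr rfl fun l _ => ?_
    have hconj : (starRingEnd ℂ) (Complex.exp (2 * (Real.pi : ℂ) * Complex.I * (ω l : ℂ) * (x : ℂ)))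
        = Complex.exp (2 * (Real.pi : ℂ) * Complex.I * ((-ω l : ℤ) : ℂ) * (x : ℂ)) := by
      rw [← Complex.exp_conj]
      congr 1
      simp only [map_mul, Complex.conj_I, Complex.conj_ofReal, map_ofNat, map_intCast]
      push_cast
      ring
    rw [hconj]
    refine mul_exp_merge _ _ _ _ _ _ ?_
    push_cast
    ring
  -- integrate
  have integrable : ∀ (m : ℤ) (c : ℂ), IntervalIntegrable
      (fun x : ℝ => c * Complex.exp (2 * (Real.pi : ℂ) * Complex.I * (m : ℂ) * (x : ℂ)))
      MeasureTheory.volume 0 1 := by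
    intro m c
    apply Continuous.intervalIntegrable
    exact continuous_const.mul (Complex.continuous_exp.comp
      (continuous_const.mul Complex.continuous_ofReal))
  have hT : (∫ x in (0:ℝ)..1, ∑ j ∈ Iset, ∑ l ∈ Iset, (a j * (starRingEnd ℂ) (a l)) *
        Complex.exp (2 * (Real.pi : ℂ) * Complex.I * ((ω j - ω l - α : ℤ) : ℂ) * (x : ℂ))) = 0 := by
    have : ∀ x : ℝ, (∑ j ∈ Iset, ∑ l ∈ Iset, (a j * (starRingEnd ℂ) (a l)) *
        Complex.exp (2 * (Real.pi : ℂ) * Complex.I * ((ω j - ω l - α : ℤ) : ℂ) * (x : ℂ))) =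
        (g 0 * (starRingEnd ℂ) (g 0)) *
          Complex.exp (2 * (Real.pi : ℂ) * Complex.I * ((-α : ℤ) : ℂ) * (x : ℂ)) := by
      intro x
      rw [← expand x, hconst x]
    simp only [this]
    rw [intervalIntegral.integral_const_mul, intKer (-α)]
    simp [hαne]
  have hT2 : (∫ x in (0:ℝ)..1, ∑ j ∈ Iset, ∑ l ∈ Iset, (a j * (starRingEnd ℂ) (a l)) *
        Complex.exp (2 * (Real.pi : ℂ) * Complex.I * ((ω j - ω l - α : ℤ) : ℂ) * (x : ℂ))) =
      a jM * (starRingEnd ℂ) (a jm) := by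
    have hint : ∀ j ∈ Iset, IntervalIntegrable
        (fun x : ℝ => ∑ l ∈ Iset, (a j * (starRingEnd ℂ) (a l)) *
          Complex.exp (2 * (Real.pi : ℂ) * Complex.I * ((ω j - ω l - α : ℤ) : ℂ) * (x : ℂ)))
        MeasureTheory.volume 0 1 := by
      intro j _
      apply Continuous.intervalIntegrable
      apply continuous_finset_sum
      intro l _
      exact continuous_const.mul (Complex.continuous_exp.comp
        (continuous_const.mul Complex.continuous_ofReal))
    rw [intervalIntegral.integral_finset_sum hint]
    have hinner : ∀ j ∈ Iset,
        (∫ x in (0:ℝ)..1, ∑ l ∈ Iset, (a j * (starRingEnd ℂ) (a l)) *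
          Complex.exp (2 * (Real.pi : ℂ) * Complex.I * ((ω j - ω l - α : ℤ) : ℂ) * (x : ℂ))) =
        ∑ l ∈ Iset, (a j * (starRingEnd ℂ) (a l)) *
          (if (ω j - ω l - α : ℤ) = 0 then 1 else 0) := by
      intro j _
      rw [intervalIntegral.integral_finset_sum (fun l _ => integrable _ _)]
      refine Finset.sum_congr rfl fun l _ => ?_
      rw [intervalIntegral.integral_const_mul, intKer]
    rw [Finset.sum_congr rfl hinner]
    have hcond : ∀ j ∈ Iset, ∀ l ∈ Iset, ((ω j - ω l - α : ℤ) = 0) ↔ (j = jM ∧ l = jm) := by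
      intro j hj l hl
      constructor
      · intro he
        have h1 : ω j ≤ ω jM := hjMmax j hj
        have h2 : ω jm ≤ ω l := hjmmin l hl
        have h3 : ω j = ω jM := by omega
        have h4 : ω l = ω jm := by omega
        exact ⟨hω h3, hω h4⟩
      · rintro ⟨rfl, rfl⟩; omega
    calc (∑ j ∈ Iset, ∑ l ∈ Iset, (a j * (starRingEnd ℂ) (a l)) *
          (if (ω j - ω l - α : ℤ) = 0 then 1 else 0))
        = ∑ j ∈ Iset, ∑ l ∈ Iset,
            (if j = jM ∧ l = jm then a jM * (starRingEnd ℂ) (a jm) else 0) := by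
          refine Finset.sum_congr rfl fun j hj => Finset.sum_congr rfl fun l hl => ?_
          by_cases hc : (ω j - ω l - α : ℤ) = 0
          · obtain ⟨rfl, rfl⟩ := (hcond j hj l hl).mp hc
            simp [hc]
          · have : ¬(j = jM ∧ l = jm) := fun hcc => hc ((hcond j hj l hl).mpr hcc)
            simp [hc, this]
      _ = a jM * (starRingEnd ℂ) (a jm) := by
          rw [Finset.sum_eq_single jM]
          · rw [Finset.sum_eq_single jm]
            · simp
            · intro l _ hlne; simp [hlne]
            · intro habs'; exact absurd hjm habs'
          · intro j _ hjne
            apply Finset.sum_eq_zero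
            intro l _
            simp [hjne]
          · intro habs'; exact absurd hjM habs'
  rw [hT] at hT2
  exact (mul_ne_zero (ha jM) (by simpa using ha jm)) hT2.symm
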